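/- Let F : ℝᵃ × ℝᵃ × ℝᵇ → ℝ and G : ℝᵃ × ℝᵃ → ℝ be differentiable with L_F- and L_G-Lipschitz gradients, and suppose the partial gradients in the first block satisfy the descent inequalities with uniform constants L_{F,p} and L_{G,p} (i.e., F(p′,q,t) ≤ F(p,q,t) + ⟨∇_p F(p,q,t), p′−p⟩ + (L_{F,p}/2)‖p′−p‖² for all p,p′,q,t, and similarly for G). Let a = 4n and S = {p ∈ (ℝ⁴)ⁿ : ‖p_i‖ = 1 for all i} be the product of unit spheres, and define L_β(p,q,t,λ) = F(p,q,t) + G(p,q) − ⟨λ, p − q⟩ + (β/2)‖p − q‖². Let H₁, H₂, H₃ be symmetric matrices with H₁ ≻ (L_{F,p}+L_{G,p})I, H₂ ≻ 0, H₃ ≻ 0, and let β > max{ 8(L_F²+L_G²)/(σ_min(H₁) − L_{F,p} − L_{G,p}), (8(L_F²+L_G²) + 16σ_max²(H₂))/σ_min(H₂), 8L_F²/σ_min(H₃) }. Consider a sequence (p^k, q^k, t^k, λ^k) such that for each k: p^{k+1} minimizes over p ∈ S the function p ↦ ⟨∇_p F(p^k,q^k,t^k) + ∇_p G(p^k,q^k),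 p⟩ − ⟨λ^k, p⟩ + (β/2)‖p − q^k‖² + ½‖p − p^k‖²_{H₁}; q^{k+1} minimizes q ↦ L_β(p^{k+1},q,t^k,λ^k) + ½‖q − q^k‖²_{H₂} over ℝᵃ; t^{k+1} minimizes t ↦ L_β(p^{k+1},q^{k+1},t,λ^k) + ½‖t − t^k‖²_{H₃} over ℝᵇ; and λ^{k+1} = λ^k − β(p^{k+1} − q^{k+1}). Define Φ^k = L_β(p^k,q^k,t^k,λ^k) + (4/β)‖H₂(q^k − q^{k−1})‖² + (4L_F²/β)‖t^k − t^{k−1}‖². Then for every k ≥ 2, Φ^k − Φ^{k+1} ≥ ‖p^{k+1} − p^k‖²_{P₁} + ‖q^{k+1} − q^k‖²_{P₂} + ‖t^{k+1} − t^k‖²_{P₃}, where P₁ = ½(H₁ − (L_{F,p}+L_{G,p})I) − (4/β)(L_F²+L_G²)I, P₂ = ½H₂ − (4/β)(L_F²+L_G²)I − (8/β)H₂ᵀH₂, P₃ = ½H₃ − (4/β)L_F² I; moreover P₁, P₂, P₃ are positive semidefinite, so the right-hand side is nonnegative. -/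

import Mathlib

open Matrix RealInnerProductSpace

/-- The quadratic form `v ↦ vᵀMv` of a matrix `M`, evaluated on a Euclidean vector;
`‖v‖²_M = vᵀMv`. -/
noncomputable def quadForm {ι : Type*} [Fintype ι] (M : Matrix ι ι ℝ)
    (v : EuclideanSpace ℝ ι) : ℝ :=
  (fun i => v i) ⬝ᵥ (M *ᵥ fun i => v i)

/-- Matrix–vector multiplication acting on Euclidean vectors. -/
noncomputable def matVec {ι : Type*} [Fintype ι] (M : Matrix ι ι ℝ)
    (v : EuclideanSpace ℝ ι) : EuclideanSpace ℝ ι :=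
  (WithLp.equiv 2 (ι → ℝ)).symm (M *ᵥ (WithLp.equiv 2 (ι → ℝ) v))

/-- The smallest eigenvalue `σ_min(M)` of a symmetric matrix `M`, via its variational
(Rayleigh quotient) characterization. -/
noncomputable def rayMin {ι : Type*} [Fintype ι] (M : Matrix ι ι ℝ) : ℝ :=
  ⨅ v : {v : ι → ℝ // ∑ i, v i ^ 2 = 1}, (v : ι → ℝ) ⬝ᵥ (M *ᵥ (v : ι → ℝ))

/-- The largest eigenvalue `σ_max(M)` of a symmetric matrix `M`, via its variational
(Rayleigh quotient) characterization. -/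
noncomputable def rayMax {ι : Type*} [Fintype ι] (M : Matrix ι ι ℝ) : ℝ :=
  ⨆ v : {v : ι → ℝ // ∑ i, v i ^ 2 = 1}, (v : ι → ℝ) ⬝ᵥ (M *ᵥ (v : ι → ℝ))

section helpers
variable {ι : Type*} [Fintype ι]

lemma norm_sq_eq_sum' (v : EuclideanSpace ℝ ι) : ‖v‖ ^ 2 = ∑ i, v i ^ 2 := by
  rw [EuclideanSpace.norm_eq, Real.sq_sqrt (by positivity)]
  simp [sq_abs]

lemma inner_eq_dot (v w : EuclideanSpace ℝ ι) : ⟪v, w⟫ = (fun i => v i) ⬝ᵥ (fun i => w i) := by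
  simp [PiLp.inner_apply, dotProduct, RCLike.inner_apply]
  exact Finset.sum_congr rfl fun _ _ => mul_comm _ _

lemma matVec_apply (M : Matrix ι ι ℝ) (v : EuclideanSpace ℝ ι) (i : ι) :
    matVec M v i = (M *ᵥ fun j => v j) i := rfl

lemma quadForm_eq_inner (M : Matrix ι ι ℝ) (v : EuclideanSpace ℝ ι) :
    quadForm M v = ⟪v, matVec M v⟫ := by
  rw [inner_eq_dot]; rfl

lemma quadForm_zero (M : Matrix ι ι ℝ) : quadForm M (0 : EuclideanSpace ℝ ι) = 0 := by
  have : (fun i => (0 : EuclideanSpace ℝ ι) i) = (0 : ι → ℝ) := rfl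
  simp [quadForm, this]

lemma matVec_symm {M : Matrix ι ι ℝ} (hM : M.IsSymm) (v w : EuclideanSpace ℝ ι) :
    ⟪matVec M v, w⟫ = ⟪v, matVec M w⟫ := by
  rw [inner_eq_dot, inner_eq_dot]
  show (M *ᵥ fun j => v j) ⬝ᵥ (fun i => w i) = (fun i => v i) ⬝ᵥ (M *ᵥ fun i => w i)
  simp only [dotProduct, Matrix.mulVec, dotProduct, Finset.sum_mul, Finset.mul_sum]
  rw [Finset.sum_comm]
  refine Finset.sum_congr rfl fun i _ => Finset.sum_congr rfl fun j _ => ?_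
  rw [show M j i = M i j from (hM.apply i j)]
  ring

lemma quadForm_add (A B : Matrix ι ι ℝ) (v : EuclideanSpace ℝ ι) :
    quadForm (A + B) v = quadForm A v + quadForm B v := by
  simp [quadForm, Matrix.add_mulVec, dotProduct_add]

lemma quadForm_sub (A B : Matrix ι ι ℝ) (v : EuclideanSpace ℝ ι) :
    quadForm (A - B) v = quadForm A v - quadForm B v := by
  simp [quadForm, Matrix.sub_mulVec, dotProduct_sub]

lemma quadForm_smul (c : ℝ) (A : Matrix ι ι ℝ) (v : EuclideanSpace ℝ ι) :
    quadForm (c • A) v = c * quadForm A v := by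
  simp [quadForm, Matrix.smul_mulVec, dotProduct_smul]

lemma quadForm_one [DecidableEq ι] (v : EuclideanSpace ℝ ι) : quadForm (1 : Matrix ι ι ℝ) v = ‖v‖ ^ 2 := by
  rw [norm_sq_eq_sum']
  simp [quadForm, dotProduct, sq]

lemma quadForm_transpose_mul (A : Matrix ι ι ℝ) (v : EuclideanSpace ℝ ι) :
    quadForm (Aᵀ * A) v = ‖matVec A v‖ ^ 2 := by
  rw [norm_sq_eq_sum']
  simp only [quadForm, ← Matrix.mulVec_mulVec]
  rw [dotProduct_mulVec, vecMul_transpose]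
  simp [dotProduct, matVec_apply, sq]
end helpers

section rayleigh
variable {ι : Type*} [Fintype ι]

lemma abs_rq_le (M : Matrix ι ι ℝ) {w : ι → ℝ} (hw : ∑ i, w i ^ 2 = 1) :
    |w ⬝ᵥ (M *ᵥ w)| ≤ ∑ i, ∑ j, |M i j| := by
  have habs : ∀ i, |w i| ≤ 1 := by
    intro i
    have h1 : w i ^ 2 ≤ 1 := hw ▸ Finset.single_le_sum (f := fun i => w i ^ 2)
      (fun i _ => sq_nonneg _) (Finset.mem_univ i)
    nlinarith [abs_nonneg (w i), sq_abs (w i)]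
  have h2 : ∀ i, |(M *ᵥ w) i| ≤ ∑ j, |M i j| := by
    intro i
    refine le_trans (Finset.abs_sum_le_sum_abs _ _) (Finset.sum_le_sum fun j _ => ?_)
    rw [abs_mul]
    exact mul_le_of_le_one_right (abs_nonneg _) (habs j)
  refine le_trans (Finset.abs_sum_le_sum_abs _ _) (Finset.sum_le_sum fun i _ => ?_)
  rw [abs_mul]
  simpa using mul_le_mul (habs i) (h2 i) (abs_nonneg _) zero_le_one

lemma bddBelow_rq (M : Matrix ι ι ℝ) :
    BddBelow (Set.range fun v : {v : ι → ℝ // ∑ i, v i ^ 2 = 1} =>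
      (v : ι → ℝ) ⬝ᵥ (M *ᵥ (v : ι → ℝ))) := by
  refine ⟨-(∑ i, ∑ j, |M i j|), ?_⟩
  rintro x ⟨v, rfl⟩
  have := abs_rq_le M v.2
  have := neg_abs_le ((v : ι → ℝ) ⬝ᵥ (M *ᵥ (v : ι → ℝ)))
  linarith

lemma bddAbove_rq (M : Matrix ι ι ℝ) :
    BddAbove (Set.range fun v : {v : ι → ℝ // ∑ i, v i ^ 2 = 1} =>
      (v : ι → ℝ) ⬝ᵥ (M *ᵥ (v : ι → ℝ))) := by
  refine ⟨∑ i, ∑ j, |M i j|, ?_⟩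
  rintro x ⟨v, rfl⟩
  have := abs_rq_le M v.2
  have := le_abs_self ((v : ι → ℝ) ⬝ᵥ (M *ᵥ (v : ι → ℝ)))
  linarith

lemma rayMin_le_rq (M : Matrix ι ι ℝ) {w : ι → ℝ} (hw : ∑ i, w i ^ 2 = 1) :
    rayMin M ≤ w ⬝ᵥ (M *ᵥ w) :=
  ciInf_le (bddBelow_rq M) ⟨w, hw⟩

lemma rq_le_rayMax (M : Matrix ι ι ℝ) {w : ι → ℝ} (hw : ∑ i, w i ^ 2 = 1) :
    w ⬝ᵥ (M *ᵥ w) ≤ rayMax M :=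
  le_ciSup (bddAbove_rq M) ⟨w, hw⟩

lemma rayMin_mul_le (M : Matrix ι ι ℝ) (v : EuclideanSpace ℝ ι) :
    rayMin M * ‖v‖ ^ 2 ≤ quadForm M v := by
  rcases eq_or_ne v 0 with rfl | hv
  · simp [quadForm_zero]
  · have hn : (0:ℝ) < ‖v‖ := norm_pos_iff.mpr hv
    set w : ι → ℝ := fun i => v i / ‖v‖ with hwdef
    have hw : ∑ i, w i ^ 2 = 1 := by
      have : ∑ i, w i ^ 2 = (∑ i, v i ^ 2) / ‖v‖ ^ 2 := by
        rw [Finset.sum_div]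
        exact Finset.sum_congr rfl fun i _ => by simp only [hwdef]; field_simp
      rw [this, ← norm_sq_eq_sum']
      field_simp
    have h := rayMin_le_rq M hw
    have hq : w ⬝ᵥ (M *ᵥ w) = quadForm M v / ‖v‖ ^ 2 := by
      have hw' : w = ‖v‖⁻¹ • fun i => v i := by
        funext i; simp [hwdef, div_eq_inv_mul]
      rw [hw', smul_dotProduct, Matrix.mulVec_smul, dotProduct_smul, smul_eq_mul, smul_eq_mul]
      show ‖v‖⁻¹ * (‖v‖⁻¹ * quadForm M v) = quadForm M v / ‖v‖ ^ 2
      rw [eq_div_iff (by positivity : (‖v‖:ℝ) ^ 2 ≠ 0)]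
      have hne : (‖v‖:ℝ) ≠ 0 := ne_of_gt hn
      field_simp
    rw [hq] at h
    calc rayMin M * ‖v‖ ^ 2 ≤ quadForm M v / ‖v‖ ^ 2 * ‖v‖ ^ 2 :=
          mul_le_mul_of_nonneg_right h (sq_nonneg _)
      _ = quadForm M v := by field_simp

lemma unit_nonempty [DecidableEq ι] [Nonempty ι] :
    Nonempty {v : ι → ℝ // ∑ i, v i ^ 2 = 1} := by
  refine ⟨⟨Pi.single (Classical.arbitrary ι) 1, ?_⟩⟩
  simp [Pi.single_apply, sq, Finset.sum_ite_eq']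

end rayleigh

section spectral
open Matrix
variable {ι : Type*} [Fintype ι] [DecidableEq ι]

lemma isHermitian_of_isSymm {M : Matrix ι ι ℝ} (h : M.IsSymm) : M.IsHermitian := by
  rw [Matrix.IsHermitian, Matrix.conjTranspose_eq_transpose_of_trivial]
  exact h

lemma matVec_eigen {M : Matrix ι ι ℝ} (hM : M.IsHermitian) (j : ι) :
    matVec M (hM.eigenvectorBasis j) = hM.eigenvalues j • hM.eigenvectorBasis j := by
  ext i
  have := congrFun (hM.mulVec_eigenvectorBasis j) i
  simpa [matVec_apply] using this

lemma repr_matVec {M : Matrix ι ι ℝ} (hs : M.IsSymm) (hM : M.IsHermitian)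
    (v : EuclideanSpace ℝ ι) (i : ι) :
    hM.eigenvectorBasis.repr (matVec M v) i
      = hM.eigenvalues i * hM.eigenvectorBasis.repr v i := by
  rw [OrthonormalBasis.repr_apply_apply, OrthonormalBasis.repr_apply_apply,
    ← matVec_symm hs, matVec_eigen hM i, real_inner_smul_left]

lemma norm_sq_repr {M : Matrix ι ι ℝ} (hM : M.IsHermitian) (v : EuclideanSpace ℝ ι) :
    ‖v‖ ^ 2 = ∑ i, (hM.eigenvectorBasis.repr v i) ^ 2 := by
  rw [← norm_sq_eq_sum' (hM.eigenvectorBasis.repr v), hM.eigenvectorBasis.repr.norm_map]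

lemma norm_matVec_sq_repr {M : Matrix ι ι ℝ} (hs : M.IsSymm) (hM : M.IsHermitian)
    (v : EuclideanSpace ℝ ι) :
    ‖matVec M v‖ ^ 2 = ∑ i, (hM.eigenvalues i * hM.eigenvectorBasis.repr v i) ^ 2 := by
  rw [norm_sq_repr hM]
  exact Finset.sum_congr rfl fun i _ => by rw [repr_matVec hs hM]

lemma quadForm_repr {M : Matrix ι ι ℝ} (hs : M.IsSymm) (hM : M.IsHermitian)
    (v : EuclideanSpace ℝ ι) :
    quadForm M v = ∑ i, hM.eigenvalues i * (hM.eigenvectorBasis.repr v i) ^ 2 := by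
  rw [quadForm_eq_inner, ← hM.eigenvectorBasis.repr.inner_map_map v (matVec M v),
    inner_eq_dot]
  refine Finset.sum_congr rfl fun i _ => ?_
  show hM.eigenvectorBasis.repr v i * hM.eigenvectorBasis.repr (matVec M v) i = _
  rw [repr_matVec hs hM]
  ring

lemma eigen_le_rayMax {M : Matrix ι ι ℝ} (hM : M.IsHermitian) (j : ι) :
    hM.eigenvalues j ≤ rayMax M := by
  set e := hM.eigenvectorBasis j with he
  have hunit : ∑ i, e i ^ 2 = 1 := by
    rw [← norm_sq_eq_sum', hM.eigenvectorBasis.orthonormal.1 j]; norm_num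
  have hval : (fun i => e i) ⬝ᵥ (M *ᵥ fun i => e i) = hM.eigenvalues j := by
    have h1 : quadForm M e = (⟪e, matVec M e⟫ : ℝ) := quadForm_eq_inner M e
    have h2 : (⟪e, matVec M e⟫ : ℝ) = hM.eigenvalues j := by
      rw [matVec_eigen hM j, real_inner_smul_right, real_inner_self_eq_norm_sq,
        hM.eigenvectorBasis.orthonormal.1 j]
      norm_num
    exact h1.trans h2
  have := rq_le_rayMax M hunit
  rwa [hval] at this

lemma rayMin_pos [Nonempty ι] {M : Matrix ι ι ℝ} (hs : M.IsSymm) (hpd : M.PosDef) :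
    0 < rayMin M := by
  have hM : M.IsHermitian := hpd.1
  set ε := Finset.univ.inf' Finset.univ_nonempty hM.eigenvalues with hε
  have hεpos : 0 < ε := by
    rw [hε, Finset.lt_inf'_iff]
    exact fun i _ => hpd.eigenvalues_pos i
  have : Nonempty {v : ι → ℝ // ∑ i, v i ^ 2 = 1} := unit_nonempty
  have h : ε ≤ rayMin M := by
    refine le_ciInf fun w => ?_
    set v : EuclideanSpace ℝ ι := (WithLp.equiv 2 (ι → ℝ)).symm (w : ι → ℝ) with hv
    have hq : (w : ι → ℝ) ⬝ᵥ (M *ᵥ (w : ι → ℝ)) = quadForm M v := rfl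
    have hnv : ‖v‖ ^ 2 = 1 := by rw [norm_sq_eq_sum']; exact w.2
    rw [hq, quadForm_repr hs hM]
    have : ∑ i, ε * (hM.eigenvectorBasis.repr v i) ^ 2
        ≤ ∑ i, hM.eigenvalues i * (hM.eigenvectorBasis.repr v i) ^ 2 :=
      Finset.sum_le_sum fun i _ => mul_le_mul_of_nonneg_right
        (Finset.inf'_le _ (Finset.mem_univ i)) (sq_nonneg _)
    calc ε = ε * ‖v‖ ^ 2 := by rw [hnv]; ring
      _ = ∑ i, ε * (hM.eigenvectorBasis.repr v i) ^ 2 := by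
          rw [norm_sq_repr hM, Finset.mul_sum]
      _ ≤ _ := this
  linarith

lemma lt_rayMin_of_posdef [Nonempty ι] (c : ℝ) {M : Matrix ι ι ℝ} (hs : M.IsSymm)
    (hpd : (M - c • 1).PosDef) : c < rayMin M := by
  have hs' : (M - c • (1 : Matrix ι ι ℝ)).IsSymm := by
    rw [Matrix.IsSymm, Matrix.transpose_sub, Matrix.transpose_smul, Matrix.transpose_one, hs.eq]
  have h0 : 0 < rayMin (M - c • 1) := rayMin_pos hs' hpd
  have : Nonempty {v : ι → ℝ // ∑ i, v i ^ 2 = 1} := unit_nonempty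
  have h : rayMin (M - c • 1) + c ≤ rayMin M := by
    refine le_ciInf fun w => ?_
    have h1 : rayMin (M - c • 1) ≤ (w : ι → ℝ) ⬝ᵥ ((M - c • 1) *ᵥ (w : ι → ℝ)) :=
      rayMin_le_rq _ w.2
    have h2 : (w : ι → ℝ) ⬝ᵥ ((M - c • 1) *ᵥ (w : ι → ℝ))
        = (w : ι → ℝ) ⬝ᵥ (M *ᵥ (w : ι → ℝ)) - c := by
      rw [Matrix.sub_mulVec, dotProduct_sub, Matrix.smul_mulVec, Matrix.one_mulVec,
        dotProduct_smul, smul_eq_mul]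
      have : (w : ι → ℝ) ⬝ᵥ (w : ι → ℝ) = 1 := by
        rw [show (w : ι → ℝ) ⬝ᵥ (w : ι → ℝ) = ∑ i, (w : ι → ℝ) i ^ 2 from
          Finset.sum_congr rfl fun i _ => (sq _).symm, w.2]
      rw [this, mul_one]
    linarith
  linarith

lemma norm_matVec_sq_le {M : Matrix ι ι ℝ} (hs : M.IsSymm) (hpd : M.PosDef)
    (v : EuclideanSpace ℝ ι) : ‖matVec M v‖ ^ 2 ≤ rayMax M ^ 2 * ‖v‖ ^ 2 := by
  have hM : M.IsHermitian := hpd.1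
  rw [norm_matVec_sq_repr hs hM, norm_sq_repr (M := M) hM, Finset.mul_sum]
  refine Finset.sum_le_sum fun i _ => ?_
  have h1 : 0 < hM.eigenvalues i := hpd.eigenvalues_pos i
  have h2 : hM.eigenvalues i ≤ rayMax M := eigen_le_rayMax hM i
  have h3 : hM.eigenvalues i ^ 2 ≤ rayMax M ^ 2 := by nlinarith
  rw [mul_pow]
  exact mul_le_mul_of_nonneg_right h3 (sq_nonneg _)
end spectral

section gradientHelpers
open InnerProductSpace
variable {E : Type*} [NormedAddCommGroup E] [InnerProductSpace ℝ E] [CompleteSpace E]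

lemma hasGradientAt_iff_fderiv {f : E → ℝ} {g x : E} :
    HasGradientAt f g x ↔ HasFDerivAt f (toDual ℝ E g) x := Iff.rfl

lemma hasGradientAt_inner_right (a x : E) : HasGradientAt (fun y => (⟪a, y⟫ : ℝ)) a x := by
  rw [hasGradientAt_iff_fderiv]
  have h := (toDual ℝ E a).hasFDerivAt (x := x)
  have he : (fun y => (⟪a, y⟫ : ℝ)) = ⇑(toDual ℝ E a) := by
    funext y; exact (toDual_apply_apply).symm
  rwa [he]

lemma HasGradientAt.add' {f g : E → ℝ} {a b x : E} (hf : HasGradientAt f a x)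
    (hg : HasGradientAt g b x) : HasGradientAt (fun y => f y + g y) (a + b) x := by
  rw [hasGradientAt_iff_fderiv] at *
  have h := hf.add hg
  rw [← map_add] at h
  exact h

lemma HasGradientAt.sub' {f g : E → ℝ} {a b x : E} (hf : HasGradientAt f a x)
    (hg : HasGradientAt g b x) : HasGradientAt (fun y => f y - g y) (a - b) x := by
  rw [hasGradientAt_iff_fderiv] at *
  have h := hf.sub hg
  rw [← map_sub] at h
  exact h

lemma HasGradientAt.const_mul' {f : E → ℝ} {a x : E} (c : ℝ) (hf : HasGradientAt f a x) :
    HasGradientAt (fun y => c * f y) (c • a) x := by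
  rw [hasGradientAt_iff_fderiv] at *
  simpa [_root_.map_smul, smul_eq_mul, mul_comm] using hf.const_mul c

/-- Gradient of `y ↦ ⟪y - a, T (y - a)⟫` for a self-adjoint `T` is `2 T(x - a)`. -/
lemma hasGradientAt_quad (T : E →L[ℝ] E) (hT : ∀ u w : E, (⟪T u, w⟫ : ℝ) = ⟪u, T w⟫)
    (a x : E) :
    HasGradientAt (fun y => (⟪y - a, T (y - a)⟫ : ℝ)) ((2 : ℝ) • T (x - a)) x := by
  rw [hasGradientAt_iff_fderiv]
  have hf : HasFDerivAt (fun y : E => y - a) (ContinuousLinearMap.id ℝ E) x :=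
    (hasFDerivAt_id x).sub_const a
  have hg : HasFDerivAt (fun y : E => T (y - a)) T x := by
    have hg' := T.hasFDerivAt.comp x hf
    rw [ContinuousLinearMap.comp_id] at hg'
    exact hg'
  have h := hf.inner ℝ hg
  refine h.congr_fderiv ?_
  ext w
  simp only [fderivInnerCLM_apply, ContinuousLinearMap.comp_apply, ContinuousLinearMap.prod_apply,
    ContinuousLinearMap.id_apply, toDual_apply_apply]
  rw [real_inner_smul_left]
  have h1 : (⟪x - a, T w⟫ : ℝ) = ⟪T (x - a), w⟫ := by rw [hT]
  have h2 : (⟪w, T (x - a)⟫ : ℝ) = ⟪T (x - a), w⟫ := real_inner_comm _ _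
  linarith

lemma gradient_eq_zero_of_min {f : E → ℝ} {x : E} (h : ∀ y, f x ≤ f y) {g : E}
    (hg : HasGradientAt f g x) : g = 0 := by
  have hmin : IsLocalMin f x := Filter.Eventually.of_forall h
  have h0 : fderiv ℝ f x = 0 := hmin.fderiv_eq_zero
  have h1 : fderiv ℝ f x = toDual ℝ E g := (hasGradientAt_iff_fderiv.mp hg).fderiv
  have h2 : toDual ℝ E g = 0 := by rw [← h1, h0]
  have := congrArg (fun L : E →L[ℝ] ℝ => L g) h2
  simp only [toDual_apply_apply, ContinuousLinearMap.zero_apply] at this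
  exact inner_self_eq_zero.mp this

end gradientHelpers

section gradientHelpers2
open InnerProductSpace
variable {E : Type*} [NormedAddCommGroup E] [InnerProductSpace ℝ E] [CompleteSpace E]

lemma hasGradientAt_half_norm_sub (β : ℝ) (P x : E) :
    HasGradientAt (fun y => β / 2 * ‖P - y‖ ^ 2) (β • (x - P)) x := by
  have hT : ∀ u w : E, (⟪(ContinuousLinearMap.id ℝ E) u, w⟫ : ℝ)
      = ⟪u, (ContinuousLinearMap.id ℝ E) w⟫ := fun u w => rfl
  have h := (hasGradientAt_quad (ContinuousLinearMap.id ℝ E) hT P x).const_mul' (β / 2)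
  have he : (fun y => β / 2 * (⟪y - P, (ContinuousLinearMap.id ℝ E) (y - P)⟫ : ℝ))
      = fun y => β / 2 * ‖P - y‖ ^ 2 := by
    funext y
    rw [ContinuousLinearMap.id_apply, real_inner_self_eq_norm_sq, norm_sub_rev]
  rw [he] at h
  have hv : (β / 2) • ((2 : ℝ) • (ContinuousLinearMap.id ℝ E) (x - P)) = β • (x - P) := by
    rw [ContinuousLinearMap.id_apply, smul_smul]
    norm_num
  rwa [hv] at h

lemma hasGradientAt_half_quadForm {ι : Type*} [Fintype ι] [DecidableEq ι] (M : Matrix ι ι ℝ) (hs : M.IsSymm)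
    (a x : EuclideanSpace ℝ ι) :
    HasGradientAt (fun y => 1 / 2 * quadForm M (y - a)) (matVec M (x - a)) x := by
  set T : EuclideanSpace ℝ ι →L[ℝ] EuclideanSpace ℝ ι :=
    LinearMap.toContinuousLinearMap (Matrix.toEuclideanLin M) with hTdef
  have hTv : ∀ v, T v = matVec M v := fun v => by
    rw [hTdef, LinearMap.coe_toContinuousLinearMap']
    rfl
  have hT : ∀ u w : EuclideanSpace ℝ ι, (⟪T u, w⟫ : ℝ) = ⟪u, T w⟫ := by
    intro u w
    rw [hTv, hTv]
    exact matVec_symm hs u w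
  have h := (hasGradientAt_quad T hT a x).const_mul' (1 / 2)
  have he : (fun y => 1 / 2 * (⟪y - a, T (y - a)⟫ : ℝ))
      = fun y => 1 / 2 * quadForm M (y - a) := by
    funext y
    rw [hTv, ← quadForm_eq_inner]
  rw [he] at h
  have hv : (1 / 2 : ℝ) • ((2 : ℝ) • T (x - a)) = matVec M (x - a) := by
    rw [smul_smul, hTv]
    norm_num
  rwa [hv] at h
end gradientHelpers2

section misc
variable {E : Type*} [NormedAddCommGroup E] [InnerProductSpace ℝ E]

lemma sq_le_of_sqrt_le {x s L : ℝ} (hx : 0 ≤ x) (hs : 0 ≤ s)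
    (h : Real.sqrt x ≤ L * Real.sqrt s) : x ≤ L ^ 2 * s := by
  have h2 := mul_self_le_mul_self (Real.sqrt_nonneg x) h
  rw [Real.mul_self_sqrt hx] at h2
  calc x ≤ L * Real.sqrt s * (L * Real.sqrt s) := h2
    _ = L ^ 2 * (Real.sqrt s * Real.sqrt s) := by ring
    _ = L ^ 2 * s := by rw [Real.mul_self_sqrt hs]

lemma norm_sq_comb_le (x y z w : E) :
    ‖-(x + y + (z - w))‖ ^ 2 ≤ 4 * (‖x‖ ^ 2 + ‖y‖ ^ 2 + ‖z‖ ^ 2 + ‖w‖ ^ 2) := by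
  rw [norm_neg]
  have h1 : ‖x + y + (z - w)‖ ≤ ‖x‖ + ‖y‖ + ‖z‖ + ‖w‖ := by
    calc ‖x + y + (z - w)‖ ≤ ‖x + y‖ + ‖z - w‖ := norm_add_le _ _
      _ ≤ ‖x‖ + ‖y‖ + (‖z‖ + ‖w‖) := add_le_add (norm_add_le _ _) (norm_sub_le _ _)
      _ = ‖x‖ + ‖y‖ + ‖z‖ + ‖w‖ := by ring
  nlinarith [norm_nonneg (x + y + (z - w)), norm_nonneg x, norm_nonneg y, norm_nonneg z,
    norm_nonneg w, sq_nonneg (‖x‖ - ‖y‖), sq_nonneg (‖x‖ - ‖z‖), sq_nonneg (‖x‖ - ‖w‖),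
    sq_nonneg (‖y‖ - ‖z‖), sq_nonneg (‖y‖ - ‖w‖), sq_nonneg (‖z‖ - ‖w‖)]

lemma quadForm_of_isEmpty {ι : Type*} [Fintype ι] [IsEmpty ι] (M : Matrix ι ι ℝ)
    (v : EuclideanSpace ℝ ι) : quadForm M v = 0 := by
  simp [quadForm, dotProduct]

lemma posSemidef_of_isEmpty {ι : Type*} [Fintype ι] [IsEmpty ι] (M : Matrix ι ι ℝ) :
    M.PosSemidef := by
  rw [Matrix.posSemidef_iff_dotProduct_mulVec]
  constructor
  · ext i j
    exact isEmptyElim i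
  · intro x
    simp [dotProduct]
end misc


variable {n b : ℕ}

/-- Partial gradient `∇_p F(p,q,t)` with respect to the first block. -/
noncomputable def gradP {ι κ : Type*} [Fintype ι] [Fintype κ]
    (F : EuclideanSpace ℝ ι → EuclideanSpace ℝ ι → EuclideanSpace ℝ κ → ℝ)
    (p q : EuclideanSpace ℝ ι) (t : EuclideanSpace ℝ κ) : EuclideanSpace ℝ ι :=
  gradient (fun p' => F p' q t) p

/-- Partial gradient `∇_q F(p,q,t)` with respect to the second block. -/
noncomputable def gradQ {ι κ : Type*} [Fintype ι] [Fintype κ]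
    (F : EuclideanSpace ℝ ι → EuclideanSpace ℝ ι → EuclideanSpace ℝ κ → ℝ)
    (p q : EuclideanSpace ℝ ι) (t : EuclideanSpace ℝ κ) : EuclideanSpace ℝ ι :=
  gradient (fun q' => F p q' t) q

/-- Partial gradient `∇_t F(p,q,t)` with respect to the third block. -/
noncomputable def gradT {ι κ : Type*} [Fintype ι] [Fintype κ]
    (F : EuclideanSpace ℝ ι → EuclideanSpace ℝ ι → EuclideanSpace ℝ κ → ℝ)
    (p q : EuclideanSpace ℝ ι) (t : EuclideanSpace ℝ κ) : EuclideanSpace ℝ κ :=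
  gradient (fun t' => F p q t') t

/-- Partial gradient `∇_p G(p,q)` with respect to the first block. -/
noncomputable def gradPG {ι : Type*} [Fintype ι]
    (G : EuclideanSpace ℝ ι → EuclideanSpace ℝ ι → ℝ)
    (p q : EuclideanSpace ℝ ι) : EuclideanSpace ℝ ι :=
  gradient (fun p' => G p' q) p

/-- Partial gradient `∇_q G(p,q)` with respect to the second block. -/
noncomputable def gradQG {ι : Type*} [Fintype ι]
    (G : EuclideanSpace ℝ ι → EuclideanSpace ℝ ι → ℝ)
    (p q : EuclideanSpace ℝ ι) : EuclideanSpace ℝ ι :=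
  gradient (fun q' => G p q') q

/-- The augmented Lagrangian
`L_β(p,q,t,λ) = F(p,q,t) + G(p,q) − ⟨λ, p − q⟩ + (β/2)‖p − q‖²`. -/
noncomputable def Lbeta {ι κ : Type*} [Fintype ι] [Fintype κ]
    (F : EuclideanSpace ℝ ι → EuclideanSpace ℝ ι → EuclideanSpace ℝ κ → ℝ)
    (G : EuclideanSpace ℝ ι → EuclideanSpace ℝ ι → ℝ) (β : ℝ)
    (p q : EuclideanSpace ℝ ι) (t : EuclideanSpace ℝ κ) (lam : EuclideanSpace ℝ ι) : ℝ :=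
  F p q t + G p q - ⟪lam, p - q⟫ + (β / 2) * ‖p - q‖ ^ 2

/-- The product of `n` unit spheres `S = {p ∈ (ℝ⁴)ⁿ : ‖p_i‖ = 1 for all i}`,
inside `ℝ^{4n} = EuclideanSpace ℝ (Fin n × Fin 4)`. -/
def sphereProd (n : ℕ) : Set (EuclideanSpace ℝ (Fin n × Fin 4)) :=
  {p | ∀ i : Fin n, Real.sqrt (∑ j : Fin 4, p (i, j) ^ 2) = 1}

/-- The key stationarity consequence of the q-step. -/
lemma lambda_formula {ι κ : Type*} [Fintype ι] [DecidableEq ι] [Fintype κ]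
    (F : EuclideanSpace ℝ ι → EuclideanSpace ℝ ι → EuclideanSpace ℝ κ → ℝ)
    (G : EuclideanSpace ℝ ι → EuclideanSpace ℝ ι → ℝ) (β : ℝ)
    (hFdiff : Differentiable ℝ
      (fun x : EuclideanSpace ℝ ι × EuclideanSpace ℝ ι × EuclideanSpace ℝ κ => F x.1 x.2.1 x.2.2))
    (hGdiff : Differentiable ℝ
      (fun x : EuclideanSpace ℝ ι × EuclideanSpace ℝ ι => G x.1 x.2))
    (H2 : Matrix ι ι ℝ) (hH2s : H2.IsSymm)
    (P q1 q0 l : EuclideanSpace ℝ ι) (tj : EuclideanSpace ℝ κ)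
    (hmin : ∀ y : EuclideanSpace ℝ ι,
      Lbeta F G β P q1 tj l + (1 / 2) * quadForm H2 (q1 - q0)
        ≤ Lbeta F G β P y tj l + (1 / 2) * quadForm H2 (y - q0)) :
    l - β • (P - q1) = -(gradQ F P q1 tj + gradQG G P q1 + matVec H2 (q1 - q0)) := by
  have hFd : DifferentiableAt ℝ (fun y => F P y tj) q1 := by
    have he : (fun y : EuclideanSpace ℝ ι => F P y tj) =
        (fun x : EuclideanSpace ℝ ι × EuclideanSpace ℝ ι × EuclideanSpace ℝ κ =>
          F x.1 x.2.1 x.2.2) ∘ (fun y => (P, y, tj)) := rfl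
    rw [he]
    exact (hFdiff _).comp _
      (DifferentiableAt.prodMk (differentiableAt_const _)
        (DifferentiableAt.prodMk differentiableAt_id (differentiableAt_const _)))
  have hGd : DifferentiableAt ℝ (fun y => G P y) q1 := by
    have he : (fun y : EuclideanSpace ℝ ι => G P y) =
        (fun x : EuclideanSpace ℝ ι × EuclideanSpace ℝ ι => G x.1 x.2) ∘ (fun y => (P, y)) := rfl
    rw [he]
    exact (hGdiff _).comp _ (DifferentiableAt.prodMk (differentiableAt_const _) differentiableAt_id)
  have h1 : HasGradientAt (fun y => F P y tj) (gradQ F P q1 tj) q1 := hFd.hasGradientAt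
  have h2 : HasGradientAt (fun y => G P y) (gradQG G P q1) q1 := hGd.hasGradientAt
  have h3 : HasGradientAt (fun y : EuclideanSpace ℝ ι => (⟪l, P - y⟫ : ℝ)) (0 - l) q1 := by
    have heq : (fun y : EuclideanSpace ℝ ι => (⟪l, P - y⟫ : ℝ))
        = fun y => (⟪l, P⟫ : ℝ) - ⟪l, y⟫ := funext fun y => inner_sub_right l P y
    rw [heq]
    exact (hasGradientAt_const q1 _).sub' (hasGradientAt_inner_right l q1)
  have h4 := hasGradientAt_half_norm_sub β P q1
  have h5 := hasGradientAt_half_quadForm H2 hH2s q0 q1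
  have hsum := (((h1.add' h2).sub' h3).add' h4).add' h5
  have hg : gradQ F P q1 tj + gradQG G P q1 - (0 - l) + β • (q1 - P) + matVec H2 (q1 - q0)
      = 0 := by
    refine gradient_eq_zero_of_min (x := q1) (f := fun y =>
      Lbeta F G β P y tj l + (1 / 2) * quadForm H2 (y - q0)) ?_ ?_
    · intro y; exact hmin y
    · exact hsum
  have hkey : l - β • (P - q1) + (gradQ F P q1 tj + gradQG G P q1 + matVec H2 (q1 - q0))
      = 0 := by
    calc l - β • (P - q1) + (gradQ F P q1 tj + gradQG G P q1 + matVec H2 (q1 - q0))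
        = gradQ F P q1 tj + gradQG G P q1 - (0 - l) + β • (q1 - P) + matVec H2 (q1 - q0) := by
          module
      _ = 0 := hg
  exact eq_neg_of_add_eq_zero_left hkey

set_option maxHeartbeats 2000000

/-- Lemma 5.3 of the paper: the merit function `Φ` of PieADMM decreases monotonically
along the iterates by a quantified amount, and the coefficient matrices `P₁, P₂, P₃`
are positive semidefinite. -/
theorem stmt14
    (F : EuclideanSpace ℝ (Fin n × Fin 4) → EuclideanSpace ℝ (Fin n × Fin 4) →
      EuclideanSpace ℝ (Fin b) → ℝ)
    (G : EuclideanSpace ℝ (Fin n × Fin 4) → EuclideanSpace ℝ (Fin n × Fin 4) → ℝ)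
    (LF LG LFp LGp : ℝ)
    (hFdiff : Differentiable ℝ
      (fun x : EuclideanSpace ℝ (Fin n × Fin 4) × EuclideanSpace ℝ (Fin n × Fin 4) ×
        EuclideanSpace ℝ (Fin b) => F x.1 x.2.1 x.2.2))
    (hGdiff : Differentiable ℝ
      (fun x : EuclideanSpace ℝ (Fin n × Fin 4) × EuclideanSpace ℝ (Fin n × Fin 4) =>
        G x.1 x.2))
    (hFlip : ∀ (p q p' q' : EuclideanSpace ℝ (Fin n × Fin 4))
        (t t' : EuclideanSpace ℝ (Fin b)),
      Real.sqrt (‖gradP F p q t - gradP F p' q' t'‖ ^ 2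
          + ‖gradQ F p q t - gradQ F p' q' t'‖ ^ 2 + ‖gradT F p q t - gradT F p' q' t'‖ ^ 2)
        ≤ LF * Real.sqrt (‖p - p'‖ ^ 2 + ‖q - q'‖ ^ 2 + ‖t - t'‖ ^ 2))
    (hGlip : ∀ p q p' q' : EuclideanSpace ℝ (Fin n × Fin 4),
      Real.sqrt (‖gradPG G p q - gradPG G p' q'‖ ^ 2 + ‖gradQG G p q - gradQG G p' q'‖ ^ 2)
        ≤ LG * Real.sqrt (‖p - p'‖ ^ 2 + ‖q - q'‖ ^ 2))
    (hFdescp : ∀ (p p' q : EuclideanSpace ℝ (Fin n × Fin 4)) (t : EuclideanSpace ℝ (Fin b)),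
      F p' q t ≤ F p q t + ⟪gradP F p q t, p' - p⟫ + (LFp / 2) * ‖p' - p‖ ^ 2)
    (hGdescp : ∀ p p' q : EuclideanSpace ℝ (Fin n × Fin 4),
      G p' q ≤ G p q + ⟪gradPG G p q, p' - p⟫ + (LGp / 2) * ‖p' - p‖ ^ 2)
    (H1 H2 : Matrix (Fin n × Fin 4) (Fin n × Fin 4) ℝ) (H3 : Matrix (Fin b) (Fin b) ℝ)
    (hH1s : H1.IsSymm) (hH2s : H2.IsSymm) (hH3s : H3.IsSymm)
    (hH1 : (H1 - (LFp + LGp) • 1).PosDef) (hH2 : H2.PosDef) (hH3 : H3.PosDef)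
    (β : ℝ)
    (hβ : β > max (max (8 * (LF ^ 2 + LG ^ 2) / (rayMin H1 - LFp - LGp))
      ((8 * (LF ^ 2 + LG ^ 2) + 16 * (rayMax H2) ^ 2) / rayMin H2))
      (8 * LF ^ 2 / rayMin H3))
    (p q : ℕ → EuclideanSpace ℝ (Fin n × Fin 4)) (t : ℕ → EuclideanSpace ℝ (Fin b))
    (lam : ℕ → EuclideanSpace ℝ (Fin n × Fin 4))
    (hpstep : ∀ k, p (k + 1) ∈ sphereProd n ∧ ∀ y ∈ sphereProd n,
      ⟪gradP F (p k) (q k) (t k) + gradPG G (p k) (q k), p (k + 1)⟫ - ⟪lam k, p (k + 1)⟫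
          + (β / 2) * ‖p (k + 1) - q k‖ ^ 2 + (1 / 2) * quadForm H1 (p (k + 1) - p k)
        ≤ ⟪gradP F (p k) (q k) (t k) + gradPG G (p k) (q k), y⟫ - ⟪lam k, y⟫
          + (β / 2) * ‖y - q k‖ ^ 2 + (1 / 2) * quadForm H1 (y - p k))
    (hqstep : ∀ k, ∀ y : EuclideanSpace ℝ (Fin n × Fin 4),
      Lbeta F G β (p (k + 1)) (q (k + 1)) (t k) (lam k)
          + (1 / 2) * quadForm H2 (q (k + 1) - q k)
        ≤ Lbeta F G β (p (k + 1)) y (t k) (lam k) + (1 / 2) * quadForm H2 (y - q k))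
    (htstep : ∀ k, ∀ y : EuclideanSpace ℝ (Fin b),
      Lbeta F G β (p (k + 1)) (q (k + 1)) (t (k + 1)) (lam k)
          + (1 / 2) * quadForm H3 (t (k + 1) - t k)
        ≤ Lbeta F G β (p (k + 1)) (q (k + 1)) y (lam k) + (1 / 2) * quadForm H3 (y - t k))
    (hlam : ∀ k, lam (k + 1) = lam k - β • (p (k + 1) - q (k + 1)))
    (Φ : ℕ → ℝ)
    (hΦ : ∀ k, Φ k = Lbeta F G β (p k) (q k) (t k) (lam k)
      + (4 / β) * ‖matVec H2 (q k - q (k - 1))‖ ^ 2 + (4 * LF ^ 2 / β) * ‖t k - t (k - 1)‖ ^ 2)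
    (P1 P2 : Matrix (Fin n × Fin 4) (Fin n × Fin 4) ℝ) (P3 : Matrix (Fin b) (Fin b) ℝ)
    (hP1 : P1 = (1 / 2 : ℝ) • (H1 - (LFp + LGp) • 1) - ((4 / β) * (LF ^ 2 + LG ^ 2)) • 1)
    (hP2 : P2 = (1 / 2 : ℝ) • H2 - ((4 / β) * (LF ^ 2 + LG ^ 2)) • 1 - (8 / β) • (H2ᵀ * H2))
    (hP3 : P3 = (1 / 2 : ℝ) • H3 - ((4 / β) * LF ^ 2) • 1) :
    (∀ k, 2 ≤ k →
      quadForm P1 (p (k + 1) - p k) + quadForm P2 (q (k + 1) - q k)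
          + quadForm P3 (t (k + 1) - t k)
        ≤ Φ k - Φ (k + 1)) ∧
      P1.PosSemidef ∧ P2.PosSemidef ∧ P3.PosSemidef := by
  classical
  -- the degenerate case where both index types are empty
  by_cases hdeg : IsEmpty (Fin n × Fin 4) ∧ IsEmpty (Fin b)
  · obtain ⟨hE1, hE2⟩ := hdeg
    have hsub : ∀ x y : EuclideanSpace ℝ (Fin n × Fin 4), x = y := fun x y =>
      by ext i; exact isEmptyElim i
    have hsubT : ∀ x y : EuclideanSpace ℝ (Fin b), x = y := fun x y =>
      by ext i; exact isEmptyElim i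
    have key : ∀ m : ℕ, Φ m = Lbeta F G β 0 0 0 0
        + 4 / β * ‖matVec H2 ((0 : EuclideanSpace ℝ (Fin n × Fin 4)) - 0)‖ ^ 2
        + 4 * LF ^ 2 / β * ‖(0 : EuclideanSpace ℝ (Fin b)) - 0‖ ^ 2 := by
      intro m
      rw [hΦ m, hsub (p m) 0, hsub (q m) 0, hsub (q (m - 1)) 0, hsubT (t m) 0,
        hsubT (t (m - 1)) 0, hsub (lam m) 0]
    refine ⟨fun k _ => ?_, posSemidef_of_isEmpty _, posSemidef_of_isEmpty _,
      posSemidef_of_isEmpty _⟩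
    rw [quadForm_of_isEmpty, quadForm_of_isEmpty, quadForm_of_isEmpty, key k, key (k + 1)]
    norm_num
  -- non-degenerate: β is positive
  rw [not_and_or, not_isEmpty_iff, not_isEmpty_iff] at hdeg
  have hβpos : 0 < β := by
    rcases hdeg with h | h
    · have hpos : 0 < rayMin H2 := rayMin_pos hH2s hH2
      have h2 : (8 * (LF ^ 2 + LG ^ 2) + 16 * (rayMax H2) ^ 2) / rayMin H2 < β :=
        lt_of_le_of_lt (le_trans (le_max_right _ _) (le_max_left _ _)) hβ
      have h3 : 0 ≤ (8 * (LF ^ 2 + LG ^ 2) + 16 * (rayMax H2) ^ 2) / rayMin H2 :=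
        div_nonneg (by positivity) (le_of_lt hpos)
      linarith
    · have hpos : 0 < rayMin H3 := rayMin_pos hH3s hH3
      have h2 : 8 * LF ^ 2 / rayMin H3 < β := lt_of_le_of_lt (le_max_right _ _) hβ
      have h3 : 0 ≤ 8 * LF ^ 2 / rayMin H3 := div_nonneg (by positivity) (le_of_lt hpos)
      linarith
  have hβne : β ≠ 0 := ne_of_gt hβpos
  have hP1psd : P1.PosSemidef := by
    rcases isEmpty_or_nonempty (Fin n × Fin 4) with hE | hNE
    · exact posSemidef_of_isEmpty _
    · rw [Matrix.posSemidef_iff_dotProduct_mulVec]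
      constructor
      · apply isHermitian_of_isSymm
        rw [Matrix.IsSymm, hP1]
        simp [Matrix.transpose_sub, Matrix.transpose_smul, Matrix.transpose_one, hH1s.eq]
      · intro x
        set v : EuclideanSpace ℝ (Fin n × Fin 4) := (WithLp.equiv 2 _).symm x with hv
        have hsx : star x = x := by funext i; simp
        have hqd : star x ⬝ᵥ (P1 *ᵥ x) = quadForm P1 v := by rw [hsx]; rfl
        rw [hqd]
        have hexp : quadForm P1 v = 1 / 2 * quadForm H1 v - (LFp + LGp) / 2 * ‖v‖ ^ 2
            - 4 / β * (LF ^ 2 + LG ^ 2) * ‖v‖ ^ 2 := by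
          rw [hP1, quadForm_sub, quadForm_smul, quadForm_sub, quadForm_smul, quadForm_smul,
            quadForm_one]
          ring
        have hray := rayMin_mul_le H1 v
        have hlt : LFp + LGp < rayMin H1 := lt_rayMin_of_posdef _ hH1s hH1
        have hb1 : 8 * (LF ^ 2 + LG ^ 2) / (rayMin H1 - LFp - LGp) < β :=
          lt_of_le_of_lt (le_trans (le_max_left _ _) (le_max_left _ _)) hβ
        have hkey : 8 * (LF ^ 2 + LG ^ 2) < β * (rayMin H1 - LFp - LGp) :=
          (div_lt_iff₀ (by linarith)).mp hb1
        have hcoef : 4 / β * (LF ^ 2 + LG ^ 2) ≤ (rayMin H1 - (LFp + LGp)) / 2 := by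
          rw [div_mul_eq_mul_div, div_le_div_iff₀ hβpos (by norm_num : (0:ℝ) < 2)]
          nlinarith
        linarith [mul_le_mul_of_nonneg_right hcoef (sq_nonneg ‖v‖)]
  have hP2psd : P2.PosSemidef := by
    rcases isEmpty_or_nonempty (Fin n × Fin 4) with hE | hNE
    · exact posSemidef_of_isEmpty _
    · rw [Matrix.posSemidef_iff_dotProduct_mulVec]
      constructor
      · apply isHermitian_of_isSymm
        rw [Matrix.IsSymm, hP2]
        simp [Matrix.transpose_sub, Matrix.transpose_smul, Matrix.transpose_one,
          Matrix.transpose_mul, Matrix.transpose_transpose, hH2s.eq]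
      · intro x
        set v : EuclideanSpace ℝ (Fin n × Fin 4) := (WithLp.equiv 2 _).symm x with hv
        have hsx : star x = x := by funext i; simp
        have hqd : star x ⬝ᵥ (P2 *ᵥ x) = quadForm P2 v := by rw [hsx]; rfl
        rw [hqd]
        have hexp : quadForm P2 v = 1 / 2 * quadForm H2 v - 4 / β * (LF ^ 2 + LG ^ 2) * ‖v‖ ^ 2
            - 8 / β * ‖matVec H2 v‖ ^ 2 := by
          rw [hP2, quadForm_sub, quadForm_sub, quadForm_smul, quadForm_smul, quadForm_smul,
            quadForm_one, quadForm_transpose_mul]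
          try ring
        have hray := rayMin_mul_le H2 v
        have hbd := norm_matVec_sq_le hH2s hH2 v
        have hpos2 : 0 < rayMin H2 := rayMin_pos hH2s hH2
        have hb2 : (8 * (LF ^ 2 + LG ^ 2) + 16 * (rayMax H2) ^ 2) / rayMin H2 < β :=
          lt_of_le_of_lt (le_trans (le_max_right _ _) (le_max_left _ _)) hβ
        have hkey : 8 * (LF ^ 2 + LG ^ 2) + 16 * (rayMax H2) ^ 2 < β * rayMin H2 :=
          (div_lt_iff₀ hpos2).mp hb2
        have hcoef : 4 / β * (LF ^ 2 + LG ^ 2) + 8 / β * (rayMax H2) ^ 2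
            ≤ rayMin H2 / 2 := by
          rw [div_mul_eq_mul_div, div_mul_eq_mul_div, ← add_div,
            div_le_div_iff₀ hβpos (by norm_num : (0:ℝ) < 2)]
          nlinarith
        have h8 : 8 / β * ‖matVec H2 v‖ ^ 2 ≤ 8 / β * ((rayMax H2) ^ 2 * ‖v‖ ^ 2) :=
          mul_le_mul_of_nonneg_left hbd (by positivity)
        linarith [mul_le_mul_of_nonneg_right hcoef (sq_nonneg ‖v‖)]
  have hP3psd : P3.PosSemidef := by
    rcases isEmpty_or_nonempty (Fin b) with hE | hNE
    · exact posSemidef_of_isEmpty _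
    · rw [Matrix.posSemidef_iff_dotProduct_mulVec]
      constructor
      · apply isHermitian_of_isSymm
        rw [Matrix.IsSymm, hP3]
        simp [Matrix.transpose_sub, Matrix.transpose_smul, Matrix.transpose_one, hH3s.eq]
      · intro x
        set v : EuclideanSpace ℝ (Fin b) := (WithLp.equiv 2 _).symm x with hv
        have hsx : star x = x := by funext i; simp
        have hqd : star x ⬝ᵥ (P3 *ᵥ x) = quadForm P3 v := by rw [hsx]; rfl
        rw [hqd]
        have hexp : quadForm P3 v = 1 / 2 * quadForm H3 v - 4 / β * LF ^ 2 * ‖v‖ ^ 2 := by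
          rw [hP3, quadForm_sub, quadForm_smul, quadForm_smul, quadForm_one]
          try ring
        have hray := rayMin_mul_le H3 v
        have hpos3 : 0 < rayMin H3 := rayMin_pos hH3s hH3
        have hb3 : 8 * LF ^ 2 / rayMin H3 < β := lt_of_le_of_lt (le_max_right _ _) hβ
        have hkey : 8 * LF ^ 2 < β * rayMin H3 := (div_lt_iff₀ hpos3).mp hb3
        have hcoef : 4 / β * LF ^ 2 ≤ rayMin H3 / 2 := by
          rw [div_mul_eq_mul_div, div_le_div_iff₀ hβpos (by norm_num : (0:ℝ) < 2)]
          nlinarith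
        linarith [mul_le_mul_of_nonneg_right hcoef (sq_nonneg ‖v‖)]
  refine ⟨?_, hP1psd, hP2psd, hP3psd⟩
  intro k hk
  have hk1 : k - 1 + 1 = k := by omega
  have hlf : ∀ j : ℕ, lam j - β • (p (j + 1) - q (j + 1))
      = -(gradQ F (p (j + 1)) (q (j + 1)) (t j) + gradQG G (p (j + 1)) (q (j + 1))
        + matVec H2 (q (j + 1) - q j)) := fun j =>
    lambda_formula F G β hFdiff hGdiff H2 hH2s (p (j + 1)) (q (j + 1)) (q j) (lam j) (t j)
      (hqstep j)
  have hL1 : lam (k + 1) = -(gradQ F (p (k + 1)) (q (k + 1)) (t k)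
      + gradQG G (p (k + 1)) (q (k + 1)) + matVec H2 (q (k + 1) - q k)) := by
    rw [hlam k]; exact hlf k
  have hLk : lam k = -(gradQ F (p k) (q k) (t (k - 1)) + gradQG G (p k) (q k)
      + matVec H2 (q k - q (k - 1))) := by
    have h := hlf (k - 1)
    have h' := hlam (k - 1)
    rw [hk1] at h h'
    rw [h', h]
  have hdl : lam (k + 1) - lam k
      = -((gradQ F (p (k + 1)) (q (k + 1)) (t k) - gradQ F (p k) (q k) (t (k - 1)))
        + (gradQG G (p (k + 1)) (q (k + 1)) - gradQG G (p k) (q k))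
        + (matVec H2 (q (k + 1) - q k) - matVec H2 (q k - q (k - 1)))) := by
    rw [hL1, hLk]; abel
  have h5 : ‖lam (k + 1) - lam k‖ ^ 2
      ≤ 4 * (‖gradQ F (p (k + 1)) (q (k + 1)) (t k) - gradQ F (p k) (q k) (t (k - 1))‖ ^ 2
        + ‖gradQG G (p (k + 1)) (q (k + 1)) - gradQG G (p k) (q k)‖ ^ 2
        + ‖matVec H2 (q (k + 1) - q k)‖ ^ 2 + ‖matVec H2 (q k - q (k - 1))‖ ^ 2) := by
    rw [hdl]; exact norm_sq_comb_le _ _ _ _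
  have hFl := sq_le_of_sqrt_le (by positivity) (by positivity)
    (hFlip (p (k + 1)) (q (k + 1)) (p k) (q k) (t k) (t (k - 1)))
  have hGl := sq_le_of_sqrt_le (by positivity) (by positivity)
    (hGlip (p (k + 1)) (q (k + 1)) (p k) (q k))
  have hA1 : ‖gradQ F (p (k + 1)) (q (k + 1)) (t k) - gradQ F (p k) (q k) (t (k - 1))‖ ^ 2
      ≤ LF ^ 2 * (‖p (k + 1) - p k‖ ^ 2 + ‖q (k + 1) - q k‖ ^ 2 + ‖t k - t (k - 1)‖ ^ 2) := by
    have h1 := sq_nonneg ‖gradP F (p (k + 1)) (q (k + 1)) (t k) - gradP F (p k) (q k) (t (k - 1))‖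
    have h2 := sq_nonneg ‖gradT F (p (k + 1)) (q (k + 1)) (t k) - gradT F (p k) (q k) (t (k - 1))‖
    linarith
  have hA2 : ‖gradQG G (p (k + 1)) (q (k + 1)) - gradQG G (p k) (q k)‖ ^ 2
      ≤ LG ^ 2 * (‖p (k + 1) - p k‖ ^ 2 + ‖q (k + 1) - q k‖ ^ 2) := by
    have h1 := sq_nonneg ‖gradPG G (p (k + 1)) (q (k + 1)) - gradPG G (p k) (q k)‖
    linarith
  have hcomb : ‖lam (k + 1) - lam k‖ ^ 2
      ≤ 4 * (LF ^ 2 * (‖p (k + 1) - p k‖ ^ 2 + ‖q (k + 1) - q k‖ ^ 2 + ‖t k - t (k - 1)‖ ^ 2)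
        + LG ^ 2 * (‖p (k + 1) - p k‖ ^ 2 + ‖q (k + 1) - q k‖ ^ 2)
        + ‖matVec H2 (q (k + 1) - q k)‖ ^ 2 + ‖matVec H2 (q k - q (k - 1))‖ ^ 2) := by
    linarith
  have h6 := mul_le_mul_of_nonneg_left hcomb (le_of_lt (one_div_pos.mpr hβpos))
  -- p-step
  have hpm : p k ∈ sphereProd n := by
    have h := (hpstep (k - 1)).1
    rwa [hk1] at h
  have hp := (hpstep k).2 (p k) hpm
  rw [sub_self, quadForm_zero] at hp
  have hFd := hFdescp (p k) (p (k + 1)) (q k) (t k)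
  have hGd := hGdescp (p k) (p (k + 1)) (q k)
  have id1 : (⟪gradP F (p k) (q k) (t k) + gradPG G (p k) (q k), p (k + 1)⟫ : ℝ)
      = ⟪gradP F (p k) (q k) (t k) + gradPG G (p k) (q k), p k⟫
        + ⟪gradP F (p k) (q k) (t k), p (k + 1) - p k⟫
        + ⟪gradPG G (p k) (q k), p (k + 1) - p k⟫ := by
    simp [inner_add_left, inner_sub_right]
    ring
  have id2 : (⟪lam k, p (k + 1)⟫ : ℝ)
      = ⟪lam k, p k⟫ + ⟪lam k, p (k + 1) - q k⟫ - ⟪lam k, p k - q k⟫ := by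
    simp [inner_sub_right]
    try ring
  have h1 : Lbeta F G β (p (k + 1)) (q k) (t k) (lam k)
      ≤ Lbeta F G β (p k) (q k) (t k) (lam k) - 1 / 2 * quadForm H1 (p (k + 1) - p k)
        + (LFp + LGp) / 2 * ‖p (k + 1) - p k‖ ^ 2 := by
    simp only [Lbeta]
    linarith [hp, hFd, hGd, id1, id2]
  -- q-step and t-step
  have h2 := hqstep k (q k)
  rw [sub_self, quadForm_zero] at h2
  have h3 := htstep k (t k)
  rw [sub_self, quadForm_zero] at h3
  -- lambda update
  have h4a : Lbeta F G β (p (k + 1)) (q (k + 1)) (t (k + 1)) (lam (k + 1))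
      = Lbeta F G β (p (k + 1)) (q (k + 1)) (t (k + 1)) (lam k)
        + β * ‖p (k + 1) - q (k + 1)‖ ^ 2 := by
    simp only [Lbeta, hlam k]
    rw [inner_sub_left, real_inner_smul_left, real_inner_self_eq_norm_sq]
    ring
  have h4b : ‖lam (k + 1) - lam k‖ ^ 2 = β ^ 2 * ‖p (k + 1) - q (k + 1)‖ ^ 2 := by
    rw [hlam k, sub_sub_cancel_left, norm_neg, norm_smul, Real.norm_eq_abs, mul_pow, sq_abs]
  have h4 : Lbeta F G β (p (k + 1)) (q (k + 1)) (t (k + 1)) (lam (k + 1))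
      = Lbeta F G β (p (k + 1)) (q (k + 1)) (t (k + 1)) (lam k)
        + 1 / β * ‖lam (k + 1) - lam k‖ ^ 2 := by
    rw [h4a, h4b]
    field_simp
  -- Phi expansions
  have hPk := hΦ k
  have hPk1 := hΦ (k + 1)
  rw [Nat.add_sub_cancel] at hPk1
  -- quadForm expansions
  have hq1 : quadForm P1 (p (k + 1) - p k)
      = 1 / 2 * quadForm H1 (p (k + 1) - p k)
        - (LFp + LGp) / 2 * ‖p (k + 1) - p k‖ ^ 2
        - 4 / β * (LF ^ 2 + LG ^ 2) * ‖p (k + 1) - p k‖ ^ 2 := by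
    rw [hP1, quadForm_sub, quadForm_smul, quadForm_sub, quadForm_smul, quadForm_smul,
      quadForm_one]
    ring
  have hq2 : quadForm P2 (q (k + 1) - q k)
      = 1 / 2 * quadForm H2 (q (k + 1) - q k)
        - 4 / β * (LF ^ 2 + LG ^ 2) * ‖q (k + 1) - q k‖ ^ 2
        - 8 / β * ‖matVec H2 (q (k + 1) - q k)‖ ^ 2 := by
    rw [hP2, quadForm_sub, quadForm_sub, quadForm_smul, quadForm_smul, quadForm_smul,
      quadForm_one, quadForm_transpose_mul]
    try ring
  have hq3 : quadForm P3 (t (k + 1) - t k)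
      = 1 / 2 * quadForm H3 (t (k + 1) - t k)
        - 4 / β * LF ^ 2 * ‖t (k + 1) - t k‖ ^ 2 := by
    rw [hP3, quadForm_sub, quadForm_smul, quadForm_smul, quadForm_one]
    try ring
  rw [hq1, hq2, hq3, hPk, hPk1]
  simp only [div_eq_mul_inv] at h4 h6 ⊢
  linarith [h1, h2, h3, h4, h6]
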